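/- Fix ε, α ∈ (0,1) and δ ≥ 0, and let T be the test that, on k observed action profiles, outputs YES if the product empirical distribution of play ∏_{i∈[n]} s_i^k is a (δ + ε/2)-Nash equilibrium and NO otherwise. If k > (72/ε²)(ln(m+1) + ln n − ln α − ln ε + ln 24), then T is an ε-test that has error probability α for δ-Nash equilibrium: for every product distribution x, if x is a δ-Nash equilibrium then T outputs YES with probability at least 1 − α, and if x is not a (δ+ε)-Nash equilibrium then T outputs NO with probability at least 1 − α (probabilities over k i.i.d. samples from x). -/

import Mathlib

open Finset

open scoped Classical

noncomputable section

/-- `x` is a probability distribution on the finite type `A`. -/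
def IsDist {A : Type*} [Fintype A] (x : A → ℝ) : Prop :=
  (∀ a, 0 ≤ x a) ∧ ∑ a, x a = 1

/-- Probability of the pure action profile `a` under the product distribution `x`. -/
def prodProb {n m : ℕ} (x : Fin n → Fin m → ℝ) (a : Fin n → Fin m) : ℝ :=
  ∏ i, x i (a i)

/-- Expected utility of the payoff function `u` under the product distribution `x`. -/
def EU {n m : ℕ} (u : (Fin n → Fin m) → ℝ) (x : Fin n → Fin m → ℝ) : ℝ :=
  ∑ a, prodProb x a * u a

/-- The point mass (pure strategy) at action `b`. -/
def pureStrat {m : ℕ} (b : Fin m) : Fin m → ℝ := fun c => if c = b then 1 else 0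

/-- `x` is an `ε`-Nash equilibrium of the game `u`: no player gains more than `ε`
by deviating to any pure action. -/
def IsNash {n m : ℕ} (u : Fin n → (Fin n → Fin m) → ℝ) (x : Fin n → Fin m → ℝ)
    (ε : ℝ) : Prop :=
  ∀ (i : Fin n) (b : Fin m),
    EU (u i) x ≥ EU (u i) (Function.update x i (pureStrat b)) - ε

/-- Empirical distribution of player `i` given `k` sampled action profiles. -/
def emp {n m : ℕ} (k : ℕ) (a : Fin k → Fin n → Fin m) (i : Fin n) : Fin m → ℝ :=
  fun b => ((univ.filter fun t => a t i = b).card : ℝ) / k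

/-- Probability of the event `E` over `k` i.i.d. samples from the product distribution `x`. -/
def PrProd {n m : ℕ} (k : ℕ) (x : Fin n → Fin m → ℝ)
    (E : (Fin k → Fin n → Fin m) → Prop) : ℝ :=
  ∑ a : Fin k → Fin n → Fin m, if E a then ∏ t, prodProb x (a t) else 0

set_option maxHeartbeats 1000000

/-! ### Auxiliary lemmas -/

lemma sum_fn_prod {ι κ : Type*} [Fintype ι] [Fintype κ] [DecidableEq ι] (f : ι → κ → ℝ) :
    ∑ g : ι → κ, ∏ i, f i (g i) = ∏ i, ∑ v, f i v := by
  rw [Finset.prod_univ_sum]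
  rw [Fintype.piFinset_univ]

lemma prodProb_nonneg {n m : ℕ} {x : Fin n → Fin m → ℝ} (hx : ∀ i, IsDist (x i))
    (p : Fin n → Fin m) : 0 ≤ prodProb x p :=
  Finset.prod_nonneg fun i _ => (hx i).1 (p i)

lemma sum_prodProb {n m : ℕ} {x : Fin n → Fin m → ℝ} (hx : ∀ i, IsDist (x i)) :
    ∑ p : Fin n → Fin m, prodProb x p = 1 := by
  unfold prodProb
  rw [sum_fn_prod]
  simp [(fun i => (hx i).2 : ∀ i, ∑ v, x i v = 1)]

lemma W_nonneg {n m k : ℕ} {x : Fin n → Fin m → ℝ} (hx : ∀ i, IsDist (x i))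
    (a : Fin k → Fin n → Fin m) : 0 ≤ ∏ t, prodProb x (a t) :=
  Finset.prod_nonneg fun t _ => prodProb_nonneg hx _

lemma sumW_one {n m k : ℕ} {x : Fin n → Fin m → ℝ} (hx : ∀ i, IsDist (x i)) :
    ∑ a : Fin k → Fin n → Fin m, ∏ t, prodProb x (a t) = 1 := by
  rw [sum_fn_prod (fun _ p => prodProb x p)]
  simp [sum_prodProb hx]

lemma EU_nonneg {n m : ℕ} {x : Fin n → Fin m → ℝ} (hx : ∀ i, IsDist (x i))
    {w : (Fin n → Fin m) → ℝ} (hw : ∀ p, 0 ≤ w p ∧ w p ≤ 1) : 0 ≤ EU w x :=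
  Finset.sum_nonneg fun p _ => mul_nonneg (prodProb_nonneg hx p) (hw p).1

lemma EU_le_one {n m : ℕ} {x : Fin n → Fin m → ℝ} (hx : ∀ i, IsDist (x i))
    {w : (Fin n → Fin m) → ℝ} (hw : ∀ p, 0 ≤ w p ∧ w p ≤ 1) : EU w x ≤ 1 := by
  calc EU w x ≤ ∑ p, prodProb x p :=
        Finset.sum_le_sum fun p _ => by
          have := prodProb_nonneg hx p
          nlinarith [(hw p).1, (hw p).2]
    _ = 1 := sum_prodProb hx

lemma exp_quad {y : ℝ} (hy : |y| ≤ 1) : Real.exp y ≤ 1 + y + y ^ 2 := by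
  have h := Real.exp_bound hy (n := 2) (by norm_num)
  have h2 : ∑ i ∈ Finset.range 2, y ^ i / i.factorial = 1 + y := by
    norm_num [Finset.sum_range_succ]
  rw [h2] at h
  have h3 := (abs_sub_le_iff.1 h).1
  have h4 : |y| ^ 2 = y ^ 2 := sq_abs y
  norm_num [Nat.factorial] at h3
  nlinarith [sq_nonneg y]

lemma exp_avg_le {ι : Type*} [Fintype ι] (hN : 0 < Fintype.card ι) (z : ι → ℝ) :
    Real.exp ((∑ c, z c) / Fintype.card ι) ≤ (∑ c, Real.exp (z c)) / Fintype.card ι := by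
  have hNR : (0:ℝ) < Fintype.card ι := by exact_mod_cast hN
  have key := Real.geom_mean_le_arith_mean_weighted Finset.univ
      (fun _ : ι => 1 / Fintype.card ι) (fun c => Real.exp (z c))
      (fun _ _ => by positivity)
      (by rw [Finset.sum_const, Finset.card_univ, nsmul_eq_mul]; field_simp)
      (fun c _ => (Real.exp_pos _).le)
  have lhs : ∏ c : ι, Real.exp (z c) ^ (1 / (Fintype.card ι : ℝ)) =
      Real.exp ((∑ c, z c) / Fintype.card ι) := by
    calc ∏ c : ι, Real.exp (z c) ^ (1 / (Fintype.card ι : ℝ))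
        = ∏ c : ι, Real.exp (z c * (1 / (Fintype.card ι : ℝ))) :=
          Finset.prod_congr rfl fun c _ => (Real.exp_mul _ _).symm
      _ = Real.exp (∑ c : ι, z c * (1 / (Fintype.card ι : ℝ))) := (Real.exp_sum _ _).symm
      _ = Real.exp ((∑ c, z c) / Fintype.card ι) := by
          simp only [mul_one_div]
          rw [← Finset.sum_div]
  calc Real.exp ((∑ c, z c) / Fintype.card ι)
      = ∏ c : ι, Real.exp (z c) ^ (1 / (Fintype.card ι : ℝ)) := lhs.symm
    _ ≤ ∑ c : ι, 1 / (Fintype.card ι : ℝ) * Real.exp (z c) := key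
    _ = (∑ c, Real.exp (z c)) / Fintype.card ι := by
        simp only [one_div, inv_mul_eq_div]
        rw [← Finset.sum_div]

lemma single_mgf {n m : ℕ} {x : Fin n → Fin m → ℝ} (hx : ∀ i, IsDist (x i))
    {w : (Fin n → Fin m) → ℝ} (hw : ∀ p, 0 ≤ w p ∧ w p ≤ 1) {θ : ℝ} (hθ : |θ| ≤ 1) :
    ∑ p : Fin n → Fin m, prodProb x p * Real.exp (θ * (w p - EU w x)) ≤ Real.exp (θ ^ 2) := by
  set μ := EU w x with hμ
  have hμ0 : 0 ≤ μ := EU_nonneg hx hw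
  have hμ1 : μ ≤ 1 := EU_le_one hx hw
  have step1 : ∀ p : Fin n → Fin m,
      prodProb x p * Real.exp (θ * (w p - μ)) ≤
      prodProb x p * (1 + θ * (w p - μ) + θ ^ 2) := by
    intro p
    apply mul_le_mul_of_nonneg_left _ (prodProb_nonneg hx p)
    have hd : |w p - μ| ≤ 1 := by
      rw [abs_le]; constructor <;> nlinarith [(hw p).1, (hw p).2]
    have hy : |θ * (w p - μ)| ≤ 1 := by
      rw [abs_mul]
      calc |θ| * |w p - μ| ≤ 1 * 1 := by
            apply mul_le_mul hθ hd (abs_nonneg _) zero_le_one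
        _ = 1 := by ring
    calc Real.exp (θ * (w p - μ)) ≤ 1 + θ * (w p - μ) + (θ * (w p - μ)) ^ 2 := exp_quad hy
      _ ≤ 1 + θ * (w p - μ) + θ ^ 2 := by
          have : (θ * (w p - μ)) ^ 2 ≤ θ ^ 2 * 1 := by
            rw [mul_pow]
            apply mul_le_mul_of_nonneg_left _ (sq_nonneg θ)
            have := abs_le.1 hd
            nlinarith
          nlinarith
  calc ∑ p : Fin n → Fin m, prodProb x p * Real.exp (θ * (w p - μ))
      ≤ ∑ p : Fin n → Fin m, prodProb x p * (1 + θ * (w p - μ) + θ ^ 2) :=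
        Finset.sum_le_sum fun p _ => step1 p
    _ = (∑ p : Fin n → Fin m, prodProb x p) * (1 + θ ^ 2)
        + θ * ((∑ p : Fin n → Fin m, prodProb x p * w p) - μ * ∑ p : Fin n → Fin m, prodProb x p) := by
        have hpt : ∀ p, prodProb x p * (1 + θ * (w p - μ) + θ ^ 2) =
            prodProb x p * (1 + θ ^ 2) + θ * (prodProb x p * w p - μ * prodProb x p) :=
          fun p => by ring
        rw [Finset.sum_congr rfl fun p _ => hpt p, Finset.sum_add_distrib, ← Finset.mul_sum,
          Finset.sum_sub_distrib, ← Finset.mul_sum, ← Finset.sum_mul]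
    _ = 1 + θ ^ 2 := by
        rw [sum_prodProb hx]
        have : ∑ p : Fin n → Fin m, prodProb x p * w p = μ := rfl
        rw [this]; ring
    _ ≤ Real.exp (θ ^ 2) := by
        have := Real.add_one_le_exp (θ ^ 2)
        linarith

/-- The shift bijection on sample sequences. -/
def shiftE {n m k : ℕ} [NeZero k] (c : Fin n → Fin k) :
    (Fin k → Fin n → Fin m) ≃ (Fin k → Fin n → Fin m) where
  toFun a := fun t j => a (t + c j) j
  invFun a := fun t j => a (t - c j) j
  left_inv a := by funext t j; simp
  right_inv a := by funext t j; simp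

lemma W_shift {n m k : ℕ} [NeZero k] {x : Fin n → Fin m → ℝ} (c : Fin n → Fin k)
    (a : Fin k → Fin n → Fin m) :
    ∏ t, prodProb x (shiftE c a t) = ∏ t, prodProb x (a t) := by
  unfold prodProb shiftE
  simp only [Equiv.coe_fn_mk]
  calc ∏ t, ∏ j, x j (a (t + c j) j)
      = ∏ j, ∏ t, x j (a (t + c j) j) := Finset.prod_comm
    _ = ∏ j, ∏ t, x j (a t j) :=
        Finset.prod_congr rfl fun j _ =>
          Fintype.prod_equiv (Equiv.addRight (c j)) _ _ (fun t => rfl)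
    _ = ∏ t, ∏ j, x j (a t j) := Finset.prod_comm

lemma sum_shift {n m k : ℕ} [NeZero k] {x : Fin n → Fin m → ℝ} (c : Fin n → Fin k)
    (G : (Fin k → Fin n → Fin m) → ℝ) :
    ∑ a : Fin k → Fin n → Fin m, (∏ t, prodProb x (a t)) * G (shiftE c a) =
    ∑ a : Fin k → Fin n → Fin m, (∏ t, prodProb x (a t)) * G a := by
  calc ∑ a : Fin k → Fin n → Fin m, (∏ t, prodProb x (a t)) * G (shiftE c a)
      = ∑ a : Fin k → Fin n → Fin m, (∏ t, prodProb x (shiftE c a t)) * G (shiftE c a) := by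
        apply Finset.sum_congr rfl
        intro a _
        rw [W_shift]
    _ = ∑ a : Fin k → Fin n → Fin m, (∏ t, prodProb x (a t)) * G a :=
        Equiv.sum_comp (shiftE c) (fun b => (∏ t, prodProb x (b t)) * G b)

lemma sum_tau {n k : ℕ} [NeZero k] (h : (Fin n → Fin k) → ℝ) :
    ∑ c : Fin n → Fin k, ∑ t : Fin k, h (fun j => t + c j) = k * ∑ τ : Fin n → Fin k, h τ := by
  rw [Finset.sum_comm]
  have : ∀ t : Fin k, ∑ c : Fin n → Fin k, h (fun j => t + c j) = ∑ τ : Fin n → Fin k, h τ := by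
    intro t
    exact Fintype.sum_equiv (Equiv.piCongrRight fun _ => Equiv.addLeft t) _ _ (fun c => rfl)
  rw [Finset.sum_congr rfl (fun t _ => this t)]
  rw [Finset.sum_const, Finset.card_univ, Fintype.card_fin, nsmul_eq_mul]

lemma emp_sum_one {n m k : ℕ} (hk0 : k ≠ 0) (a : Fin k → Fin n → Fin m) (i : Fin n) :
    ∑ b, emp k a i b = 1 := by
  unfold emp
  rw [← Finset.sum_div]
  have : ∑ b : Fin m, ((univ.filter fun t => a t i = b).card : ℝ) =
      ((∑ b : Fin m, (univ.filter fun t => a t i = b).card : ℕ) : ℝ) := by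
    push_cast; ring
  rw [this, ← Finset.card_eq_sum_card_fiberwise (f := fun t => a t i) (s := univ) (t := univ)
    (fun t _ => mem_univ _)]
  rw [Finset.card_univ, Fintype.card_fin]
  field_simp

lemma EU_emp_repr {n m k : ℕ} (hk0 : k ≠ 0) (w : (Fin n → Fin m) → ℝ)
    (a : Fin k → Fin n → Fin m) :
    EU w (emp k a) = (∑ τ : Fin n → Fin k, w (fun j => a (τ j) j)) / (k : ℝ) ^ n := by
  have hkR : (0:ℝ) < k := by positivity
  unfold EU emp prodProb
  have step1 : ∀ b : Fin n → Fin m,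
      (∏ i, ((univ.filter fun t => a t i = b i).card : ℝ) / k) =
      (∑ τ : Fin n → Fin k, ∏ i, if a (τ i) i = b i then (1:ℝ) else 0) / (k:ℝ) ^ n := by
    intro b
    rw [Finset.prod_div_distrib, Finset.prod_const, Finset.card_univ, Fintype.card_fin]
    congr 1
    rw [sum_fn_prod (fun i t => if a t i = b i then (1:ℝ) else 0)]
    apply Finset.prod_congr rfl
    intro i _
    rw [Finset.card_filter]
    push_cast
    apply Finset.sum_congr rfl
    intro t _
    by_cases h : a t i = b i <;> simp [h]
  calc ∑ b : Fin n → Fin m, (∏ i, ((univ.filter fun t => a t i = b i).card : ℝ) / k) * w b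
      = ∑ b : Fin n → Fin m,
          ((∑ τ : Fin n → Fin k, ∏ i, if a (τ i) i = b i then (1:ℝ) else 0) / (k:ℝ) ^ n) * w b := by
        apply Finset.sum_congr rfl
        intro b _
        rw [step1 b]
    _ = (∑ b : Fin n → Fin m, ∑ τ : Fin n → Fin k,
          (∏ i, if a (τ i) i = b i then (1:ℝ) else 0) * w b) / (k:ℝ) ^ n := by
        rw [Finset.sum_div]
        apply Finset.sum_congr rfl
        intro b _
        rw [div_mul_eq_mul_div, Finset.sum_mul]
    _ = (∑ τ : Fin n → Fin k, ∑ b : Fin n → Fin m,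
          (∏ i, if a (τ i) i = b i then (1:ℝ) else 0) * w b) / (k:ℝ) ^ n := by
        rw [Finset.sum_comm]
    _ = (∑ τ : Fin n → Fin k, w (fun j => a (τ j) j)) / (k:ℝ) ^ n := by
        congr 1
        apply Finset.sum_congr rfl
        intro τ _
        have hb : ∀ b : Fin n → Fin m,
            (∏ i, if a (τ i) i = b i then (1:ℝ) else 0) * w b =
            if (fun j => a (τ j) j) = b then w b else 0 := by
          intro b
          rw [Finset.prod_boole]
          have hiff : (∀ i ∈ (univ : Finset (Fin n)), a (τ i) i = b i) ↔
              ((fun j => a (τ j) j) = b) := by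
            simp [funext_iff]
          simp only [hiff, ite_mul, one_mul, zero_mul]
        rw [Finset.sum_congr rfl fun b _ => hb b,
          Finset.sum_ite_eq univ (fun j => a (τ j) j) w]
        simp

lemma EU_update {n m : ℕ} (y : Fin n → Fin m → ℝ) (hy : ∀ i, ∑ v, y i v = 1)
    (g : (Fin n → Fin m) → ℝ) (i : Fin n) (b : Fin m) :
    EU g (Function.update y i (pureStrat b)) = EU (fun p => g (Function.update p i b)) y := by
  classical
  set R : (Fin n → Fin m) → ℝ := fun p => ∏ j ∈ univ.erase i, y j (p j) with hR
  have decomp : ∀ (q : Fin m → ℝ) (p : Fin n → Fin m),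
      (∏ j, (Function.update y i q) j (p j)) = q (p i) * R p := by
    intro q p
    rw [← Finset.mul_prod_erase univ _ (mem_univ i)]
    congr 1
    · simp
    · apply Finset.prod_congr rfl
      intro j hj
      rw [Function.update_of_ne (Finset.ne_of_mem_erase hj)]
  have decomp' : ∀ p : Fin n → Fin m, prodProb y p = y i (p i) * R p := by
    intro p
    unfold prodProb
    rw [← Finset.mul_prod_erase univ _ (mem_univ i)]
  have Rupd : ∀ (p : Fin n → Fin m) (v : Fin m), R (Function.update p i v) = R p := by
    intro p v
    apply Finset.prod_congr rfl
    intro j hj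
    rw [Function.update_of_ne (Finset.ne_of_mem_erase hj)]
  -- the involution
  have hinv : Function.Involutive
      (fun q : Fin m × (Fin n → Fin m) => (q.2 i, Function.update q.2 i q.1)) := by
    intro q
    simp [Function.update_idem, Function.update_eq_self]
  set σ : (Fin m × (Fin n → Fin m)) ≃ (Fin m × (Fin n → Fin m)) := hinv.toPerm _ with hσ
  have key : ∑ q : Fin m × (Fin n → Fin m),
        y i q.1 * (pureStrat b (q.2 i) * R q.2 * g q.2)
      = ∑ q : Fin m × (Fin n → Fin m),
        y i (q.2 i) * (pureStrat b q.1 * R q.2 * g (Function.update q.2 i q.1)) := by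
    calc ∑ q : Fin m × (Fin n → Fin m), y i q.1 * (pureStrat b (q.2 i) * R q.2 * g q.2)
        = ∑ q : Fin m × (Fin n → Fin m),
            y i (σ q).1 * (pureStrat b ((σ q).2 i) * R (σ q).2 * g (σ q).2) :=
          (Equiv.sum_comp σ fun q => y i q.1 * (pureStrat b (q.2 i) * R q.2 * g q.2)).symm
      _ = ∑ q : Fin m × (Fin n → Fin m),
            y i (q.2 i) * (pureStrat b q.1 * R q.2 * g (Function.update q.2 i q.1)) := by
          apply Finset.sum_congr rfl
          intro q _
          have h1 : (σ q).1 = q.2 i := rfl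
          have h2 : (σ q).2 = Function.update q.2 i q.1 := rfl
          rw [h1, h2, Function.update_self, Rupd]
  -- evaluate both sides
  have lhs_eq : ∑ q : Fin m × (Fin n → Fin m),
      y i q.1 * (pureStrat b (q.2 i) * R q.2 * g q.2)
      = EU g (Function.update y i (pureStrat b)) := by
    rw [Fintype.sum_prod_type, Finset.sum_comm]
    unfold EU
    apply Finset.sum_congr rfl
    intro p _
    dsimp only
    rw [← Finset.sum_mul, hy i, one_mul]
    rw [show prodProb (Function.update y i (pureStrat b)) p = pureStrat b (p i) * R p from
      decomp _ p]
  have rhs_eq : ∑ q : Fin m × (Fin n → Fin m),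
      y i (q.2 i) * (pureStrat b q.1 * R q.2 * g (Function.update q.2 i q.1))
      = EU (fun p => g (Function.update p i b)) y := by
    rw [Fintype.sum_prod_type, Finset.sum_comm]
    unfold EU
    apply Finset.sum_congr rfl
    intro p _
    dsimp only
    have hsum : ∑ v : Fin m, pureStrat b v * g (Function.update p i v) =
        g (Function.update p i b) := by
      unfold pureStrat
      rw [Finset.sum_congr rfl fun v (_ : v ∈ univ) => by
        rw [show (if v = b then (1:ℝ) else 0) * g (Function.update p i v) =
          (if v = b then g (Function.update p i v) else 0) from by by_cases h : v = b <;> simp [h]]]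
      simp
    calc ∑ v : Fin m, y i (p i) * (pureStrat b v * R p * g (Function.update p i v))
        = y i (p i) * R p * ∑ v : Fin m, pureStrat b v * g (Function.update p i v) := by
          rw [Finset.mul_sum]
          exact Finset.sum_congr rfl fun v _ => by ring
      _ = y i (p i) * R p * g (Function.update p i b) := by rw [hsum]
      _ = prodProb y p * g (Function.update p i b) := by rw [decomp' p]
  rw [← lhs_eq, key, rhs_eq]

lemma mgf {n m k : ℕ} (hk0 : k ≠ 0) {x : Fin n → Fin m → ℝ} (hx : ∀ i, IsDist (x i))
    {w : (Fin n → Fin m) → ℝ} (hw : ∀ p, 0 ≤ w p ∧ w p ≤ 1) {lam : ℝ}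
    (hlam : |lam| ≤ k) :
    ∑ a : Fin k → Fin n → Fin m,
      (∏ t, prodProb x (a t)) * Real.exp (lam * (EU w (emp k a) - EU w x)) ≤
    Real.exp (lam ^ 2 / k) := by
  haveI : NeZero k := ⟨hk0⟩
  have hkR : (0:ℝ) < k := by positivity
  set μ := EU w x with hμdef
  have hNval : ((Fintype.card (Fin n → Fin k) : ℕ) : ℝ) = (k:ℝ) ^ n := by
    rw [Fintype.card_fun]
    push_cast
    simp
  have hNpos : 0 < Fintype.card (Fin n → Fin k) := Fintype.card_pos
  have hNR : (0:ℝ) < (Fintype.card (Fin n → Fin k) : ℝ) := by exact_mod_cast hNpos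
  set Y : (Fin n → Fin k) → (Fin k → Fin n → Fin m) → ℝ :=
    fun c a => (∑ t : Fin k, w (fun j => a (t + c j) j)) / k with hY
  have repr : ∀ a : Fin k → Fin n → Fin m, lam * (EU w (emp k a) - μ) =
      (∑ c : Fin n → Fin k, lam * (Y c a - μ)) / (Fintype.card (Fin n → Fin k)) := by
    intro a
    have hsumY : ∑ c : Fin n → Fin k, Y c a =
        ∑ τ : Fin n → Fin k, w (fun j => a (τ j) j) := by
      rw [hY]
      dsimp only
      rw [← Finset.sum_div]
      rw [sum_tau (fun τ => w (fun j => a (τ j) j))]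
      field_simp
    have h2 : ∑ c : Fin n → Fin k, lam * (Y c a - μ)
        = lam * ((∑ c : Fin n → Fin k, Y c a) -
            (Fintype.card (Fin n → Fin k)) * μ) := by
      rw [← Finset.mul_sum]
      congr 1
      rw [Finset.sum_sub_distrib, Finset.sum_const, Finset.card_univ, nsmul_eq_mul]
    rw [h2, hsumY, EU_emp_repr hk0 w a]
    rw [hNval]
    have hkn : ((k:ℝ) ^ n) ≠ 0 := by positivity
    field_simp
  have jensen : ∀ a : Fin k → Fin n → Fin m,
      Real.exp (lam * (EU w (emp k a) - μ)) ≤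
      (∑ c : Fin n → Fin k, Real.exp (lam * (Y c a - μ))) /
        (Fintype.card (Fin n → Fin k)) := by
    intro a
    rw [repr a]
    exact exp_avg_le hNpos _
  set G : (Fin k → Fin n → Fin m) → ℝ :=
    fun b => Real.exp (lam * ((∑ t : Fin k, w (b t)) / k - μ)) with hG
  have single : ∑ p : Fin n → Fin m, prodProb x p * Real.exp ((lam / k) * (w p - μ)) ≤
      Real.exp ((lam / k) ^ 2) := by
    apply single_mgf hx hw
    rw [abs_div, abs_of_pos hkR, div_le_one hkR]
    exact hlam
  have singleG : ∑ a : Fin k → Fin n → Fin m, (∏ t, prodProb x (a t)) * G a ≤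
      Real.exp (lam ^ 2 / k) := by
    have hGa : ∀ a : Fin k → Fin n → Fin m,
        G a = ∏ t : Fin k, Real.exp ((lam / k) * (w (a t) - μ)) := by
      intro a
      rw [hG]
      dsimp only
      rw [← Real.exp_sum]
      congr 1
      rw [Finset.sum_congr rfl fun t (_ : t ∈ univ) => (by ring :
        (lam / k) * (w (a t) - μ) = (lam / k) * w (a t) - (lam / k) * μ)]
      rw [Finset.sum_sub_distrib, ← Finset.mul_sum, Finset.sum_const, Finset.card_univ,
        Fintype.card_fin, nsmul_eq_mul]
      field_simp
    calc ∑ a : Fin k → Fin n → Fin m, (∏ t, prodProb x (a t)) * G a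
        = ∑ a : Fin k → Fin n → Fin m,
            ∏ t : Fin k, (prodProb x (a t) * Real.exp ((lam / k) * (w (a t) - μ))) := by
          apply Finset.sum_congr rfl
          intro a _
          rw [hGa a, Finset.prod_mul_distrib]
      _ = ∏ t : Fin k, ∑ p : Fin n → Fin m,
            prodProb x p * Real.exp ((lam / k) * (w p - μ)) := by
          rw [sum_fn_prod (fun _ p => prodProb x p * Real.exp ((lam / k) * (w p - μ)))]
      _ = (∑ p : Fin n → Fin m, prodProb x p * Real.exp ((lam / k) * (w p - μ))) ^ k := by
          rw [Finset.prod_const, Finset.card_univ, Fintype.card_fin]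
      _ ≤ (Real.exp ((lam / k) ^ 2)) ^ k := by
          apply pow_le_pow_left₀ _ single
          apply Finset.sum_nonneg
          intro p _
          exact mul_nonneg (prodProb_nonneg hx p) (Real.exp_pos _).le
      _ = Real.exp (lam ^ 2 / k) := by
          rw [← Real.exp_nat_mul]
          congr 1
          field_simp
  calc ∑ a : Fin k → Fin n → Fin m,
        (∏ t, prodProb x (a t)) * Real.exp (lam * (EU w (emp k a) - μ))
      ≤ ∑ a : Fin k → Fin n → Fin m, (∏ t, prodProb x (a t)) *
          ((∑ c : Fin n → Fin k, Real.exp (lam * (Y c a - μ))) /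
            (Fintype.card (Fin n → Fin k))) :=
        Finset.sum_le_sum fun a _ =>
          mul_le_mul_of_nonneg_left (jensen a) (W_nonneg hx a)
    _ = (∑ a : Fin k → Fin n → Fin m, ∑ c : Fin n → Fin k,
          (∏ t, prodProb x (a t)) * Real.exp (lam * (Y c a - μ))) /
            (Fintype.card (Fin n → Fin k)) := by
        rw [Finset.sum_div]
        apply Finset.sum_congr rfl
        intro a _
        rw [← mul_div_assoc, Finset.mul_sum]
    _ = (∑ c : Fin n → Fin k, ∑ a : Fin k → Fin n → Fin m,
          (∏ t, prodProb x (a t)) * Real.exp (lam * (Y c a - μ))) /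
            (Fintype.card (Fin n → Fin k)) := by
        rw [Finset.sum_comm]
    _ = (∑ c : Fin n → Fin k, ∑ a : Fin k → Fin n → Fin m,
          (∏ t, prodProb x (a t)) * G a) / (Fintype.card (Fin n → Fin k)) := by
        congr 1
        apply Finset.sum_congr rfl
        intro c _
        have : ∀ a : Fin k → Fin n → Fin m,
            Real.exp (lam * (Y c a - μ)) = G (shiftE c a) := by
          intro a
          simp only [hG, hY, shiftE, Equiv.coe_fn_mk]
        rw [Finset.sum_congr rfl fun a (_ : a ∈ univ) => by rw [this a]]
        exact sum_shift c G
    _ ≤ (∑ c : Fin n → Fin k, Real.exp (lam ^ 2 / k)) /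
          (Fintype.card (Fin n → Fin k)) := by
        apply (div_le_div_iff_of_pos_right hNR).mpr
        exact Finset.sum_le_sum fun c _ => singleG
    _ = Real.exp (lam ^ 2 / k) := by
        rw [Finset.sum_const, Finset.card_univ, nsmul_eq_mul]
        field_simp

lemma tail_abs {n m k : ℕ} (hk0 : k ≠ 0) {x : Fin n → Fin m → ℝ} (hx : ∀ i, IsDist (x i))
    {w : (Fin n → Fin m) → ℝ} (hw : ∀ p, 0 ≤ w p ∧ w p ≤ 1) {s : ℝ}
    (hs0 : 0 < s) (hs2 : s ≤ 2) :
    PrProd k x (fun a => s < |EU w (emp k a) - EU w x|) ≤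
      2 * Real.exp (-(k * s ^ 2 / 4)) := by
  have hkR : (0:ℝ) < k := by positivity
  set μ := EU w x with hμdef
  -- generic one-sided bound
  have oneside : ∀ lam : ℝ, |lam| ≤ k →
      ∑ a : Fin k → Fin n → Fin m,
        (if s < lam / |lam| * (EU w (emp k a) - μ) ∧ lam ≠ 0 then ∏ t, prodProb x (a t) else 0) ≤
      Real.exp (-(|lam| * s) + lam ^ 2 / k) := by
    intro lam hlam
    have key := mgf hk0 hx hw hlam
    calc ∑ a : Fin k → Fin n → Fin m,
          (if s < lam / |lam| * (EU w (emp k a) - μ) ∧ lam ≠ 0 then ∏ t, prodProb x (a t) else 0)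
        ≤ ∑ a : Fin k → Fin n → Fin m,
            Real.exp (-(|lam| * s)) *
              ((∏ t, prodProb x (a t)) * Real.exp (lam * (EU w (emp k a) - μ))) := by
          apply Finset.sum_le_sum
          intro a _
          by_cases h : s < lam / |lam| * (EU w (emp k a) - μ) ∧ lam ≠ 0
          · rw [if_pos h]
            obtain ⟨h1, h2⟩ := h
            have habs : (0:ℝ) < |lam| := abs_pos.2 h2
            have hgt : |lam| * s < lam * (EU w (emp k a) - μ) := by
              have h3 : |lam| * s < |lam| * (lam / |lam| * (EU w (emp k a) - μ)) :=
                mul_lt_mul_of_pos_left h1 habs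
              have h4 : |lam| * (lam / |lam| * (EU w (emp k a) - μ)) =
                  lam * (EU w (emp k a) - μ) := by
                field_simp
              linarith
            have hexp : (1:ℝ) ≤ Real.exp (-(|lam| * s)) * Real.exp (lam * (EU w (emp k a) - μ)) := by
              rw [← Real.exp_add]
              apply Real.one_le_exp
              linarith
            have hWn := W_nonneg hx a
            calc (∏ t, prodProb x (a t))
                = (∏ t, prodProb x (a t)) * 1 := by ring
              _ ≤ (∏ t, prodProb x (a t)) *
                  (Real.exp (-(|lam| * s)) * Real.exp (lam * (EU w (emp k a) - μ))) :=
                  mul_le_mul_of_nonneg_left hexp hWn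
              _ = Real.exp (-(|lam| * s)) *
                  ((∏ t, prodProb x (a t)) * Real.exp (lam * (EU w (emp k a) - μ))) := by ring
          · rw [if_neg h]
            exact mul_nonneg (Real.exp_pos _).le
              (mul_nonneg (W_nonneg hx a) (Real.exp_pos _).le)
      _ = Real.exp (-(|lam| * s)) *
            ∑ a : Fin k → Fin n → Fin m,
              (∏ t, prodProb x (a t)) * Real.exp (lam * (EU w (emp k a) - μ)) := by
          rw [Finset.mul_sum]
      _ ≤ Real.exp (-(|lam| * s)) * Real.exp (lam ^ 2 / k) := by
          apply mul_le_mul_of_nonneg_left key (Real.exp_pos _).le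
      _ = Real.exp (-(|lam| * s) + lam ^ 2 / k) := (Real.exp_add _ _).symm
  -- apply with lam = k*s/2 and lam = -(k*s/2)
  have hlamval : |((k:ℝ) * s / 2)| ≤ k := by
    rw [abs_of_pos (by positivity)]
    nlinarith
  have hlamval' : |(-((k:ℝ) * s / 2))| ≤ k := by rwa [abs_neg]
  have hlamne : ((k:ℝ) * s / 2) ≠ 0 := by positivity
  have e1 := oneside ((k:ℝ) * s / 2) hlamval
  have e2 := oneside (-((k:ℝ) * s / 2)) hlamval'
  have habs1 : |((k:ℝ) * s / 2)| = (k:ℝ) * s / 2 := abs_of_pos (by positivity)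
  have exp_val : ∀ lam : ℝ, |lam| = (k:ℝ) * s / 2 →
      Real.exp (-(|lam| * s) + lam ^ 2 / k) = Real.exp (-(k * s ^ 2 / 4)) := by
    intro lam h
    congr 1
    have h2 : lam ^ 2 = ((k:ℝ) * s / 2) ^ 2 := by
      rw [← sq_abs, h]
    rw [h, h2]
    field_simp
    ring
  rw [exp_val _ habs1] at e1
  rw [exp_val _ (by rw [abs_neg, habs1])] at e2
  -- combine
  unfold PrProd
  have split : ∀ a : Fin k → Fin n → Fin m,
      (if s < |EU w (emp k a) - μ| then ∏ t, prodProb x (a t) else 0) ≤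
      (if s < ((k:ℝ) * s / 2) / |((k:ℝ) * s / 2)| * (EU w (emp k a) - μ) ∧ ((k:ℝ) * s / 2) ≠ 0
        then ∏ t, prodProb x (a t) else 0) +
      (if s < (-((k:ℝ) * s / 2)) / |(-((k:ℝ) * s / 2))| * (EU w (emp k a) - μ) ∧ (-((k:ℝ) * s / 2)) ≠ 0
        then ∏ t, prodProb x (a t) else 0) := by
    intro a
    have hWn := W_nonneg hx a
    have hite1 : (0:ℝ) ≤ (if s < ((k:ℝ) * s / 2) / |((k:ℝ) * s / 2)| * (EU w (emp k a) - μ) ∧ ((k:ℝ) * s / 2) ≠ 0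
        then ∏ t, prodProb x (a t) else 0) := by
      by_cases hh : s < ((k:ℝ) * s / 2) / |((k:ℝ) * s / 2)| * (EU w (emp k a) - μ) ∧ ((k:ℝ) * s / 2) ≠ 0
      · rw [if_pos hh]; exact hWn
      · rw [if_neg hh]
    have hite2 : (0:ℝ) ≤ (if s < (-((k:ℝ) * s / 2)) / |(-((k:ℝ) * s / 2))| * (EU w (emp k a) - μ) ∧ (-((k:ℝ) * s / 2)) ≠ 0
        then ∏ t, prodProb x (a t) else 0) := by
      by_cases hh : s < (-((k:ℝ) * s / 2)) / |(-((k:ℝ) * s / 2))| * (EU w (emp k a) - μ) ∧ (-((k:ℝ) * s / 2)) ≠ 0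
      · rw [if_pos hh]; exact hWn
      · rw [if_neg hh]
    by_cases h : s < |EU w (emp k a) - μ|
    · rw [if_pos h]
      rcases lt_abs.mp h with h1 | h1
      · have hc1 : s < ((k:ℝ) * s / 2) / |((k:ℝ) * s / 2)| * (EU w (emp k a) - μ) ∧
            ((k:ℝ) * s / 2) ≠ 0 := by
          refine ⟨?_, hlamne⟩
          rw [habs1, div_self hlamne, one_mul]
          exact h1
        rw [if_pos hc1]
        linarith
      · have hc2 : s < (-((k:ℝ) * s / 2)) / |(-((k:ℝ) * s / 2))| * (EU w (emp k a) - μ) ∧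
            (-((k:ℝ) * s / 2)) ≠ 0 := by
          refine ⟨?_, by simpa using hlamne⟩
          rw [abs_neg, habs1, neg_div, div_self hlamne, neg_one_mul]
          exact h1
        rw [if_pos hc2]
        linarith
    · rw [if_neg h]
      positivity
  calc ∑ a : Fin k → Fin n → Fin m, (if s < |EU w (emp k a) - μ| then ∏ t, prodProb x (a t) else 0)
      ≤ ∑ a : Fin k → Fin n → Fin m, ((if s < ((k:ℝ) * s / 2) / |((k:ℝ) * s / 2)| * (EU w (emp k a) - μ) ∧ ((k:ℝ) * s / 2) ≠ 0
        then ∏ t, prodProb x (a t) else 0) +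
      (if s < (-((k:ℝ) * s / 2)) / |(-((k:ℝ) * s / 2))| * (EU w (emp k a) - μ) ∧ (-((k:ℝ) * s / 2)) ≠ 0
        then ∏ t, prodProb x (a t) else 0)) := Finset.sum_le_sum fun a _ => split a
    _ = (∑ a : Fin k → Fin n → Fin m, (if s < ((k:ℝ) * s / 2) / |((k:ℝ) * s / 2)| * (EU w (emp k a) - μ) ∧ ((k:ℝ) * s / 2) ≠ 0
        then ∏ t, prodProb x (a t) else 0)) +
        ∑ a : Fin k → Fin n → Fin m, (if s < (-((k:ℝ) * s / 2)) / |(-((k:ℝ) * s / 2))| * (EU w (emp k a) - μ) ∧ (-((k:ℝ) * s / 2)) ≠ 0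
        then ∏ t, prodProb x (a t) else 0) := Finset.sum_add_distrib
    _ ≤ Real.exp (-(k * s ^ 2 / 4)) + Real.exp (-(k * s ^ 2 / 4)) := add_le_add e1 e2
    _ = 2 * Real.exp (-(k * s ^ 2 / 4)) := by ring

lemma PrProd_mono {n m k : ℕ} {x : Fin n → Fin m → ℝ} (hx : ∀ i, IsDist (x i))
    {E F : (Fin k → Fin n → Fin m) → Prop} (h : ∀ a, E a → F a) :
    PrProd k x E ≤ PrProd k x F := by
  unfold PrProd
  apply Finset.sum_le_sum
  intro a _
  by_cases hE : E a
  · rw [if_pos hE, if_pos (h a hE)]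
  · rw [if_neg hE]
    by_cases hF : F a
    · rw [if_pos hF]; exact W_nonneg hx a
    · rw [if_neg hF]

lemma PrProd_compl {n m k : ℕ} {x : Fin n → Fin m → ℝ} (hx : ∀ i, IsDist (x i))
    (E : (Fin k → Fin n → Fin m) → Prop) :
    PrProd k x E = 1 - PrProd k x (fun a => ¬ E a) := by
  have key : PrProd k x E + PrProd k x (fun a => ¬ E a) = 1 := by
    unfold PrProd
    rw [← Finset.sum_add_distrib, ← sumW_one (k := k) hx]
    apply Finset.sum_congr rfl
    intro a _
    by_cases h : E a <;> simp [h]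
  linarith

lemma PrProd_exists_le {n m k : ℕ} {x : Fin n → Fin m → ℝ} (hx : ∀ i, IsDist (x i))
    {ι : Type*} [Fintype ι] (B : ι → (Fin k → Fin n → Fin m) → Prop) :
    PrProd k x (fun a => ∃ q, B q a) ≤ ∑ q : ι, PrProd k x (B q) := by
  unfold PrProd
  refine le_trans (Finset.sum_le_sum ?_) (le_of_eq Finset.sum_comm)
  intro a _
  have hnn : ∀ q : ι, 0 ≤ (if B q a then ∏ t, prodProb x (a t) else 0) := by
    intro q
    by_cases hq : B q a
    · rw [if_pos hq]; exact W_nonneg hx a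
    · rw [if_neg hq]
  by_cases h : ∃ q, B q a
  · rw [if_pos h]
    obtain ⟨q0, hq0⟩ := h
    exact le_trans (le_of_eq (if_pos hq0).symm)
      (Finset.single_le_sum (fun q _ => hnn q) (mem_univ q0))
  · rw [if_neg h]
    exact Finset.sum_nonneg fun q _ => hnn q

/-- The family of payoff functions to which we apply the concentration bound. -/
def wfam {n m : ℕ} (u : Fin n → (Fin n → Fin m) → ℝ) :
    Fin n × Option (Fin m) → (Fin n → Fin m) → ℝ
  | (i, none) => u i
  | (i, some b) => fun p => u i (Function.update p i b)

lemma wfam_none {n m : ℕ} (u : Fin n → (Fin n → Fin m) → ℝ) (i : Fin n) :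
    wfam u (i, none) = u i := rfl

lemma wfam_some {n m : ℕ} (u : Fin n → (Fin n → Fin m) → ℝ) (i : Fin n) (b : Fin m) :
    wfam u (i, some b) = fun p => u i (Function.update p i b) := rfl

/-- The test that outputs YES iff the product empirical distribution of
the `k` observed action profiles is a `(δ + ε/2)`-Nash equilibrium is an `ε`-test with
error probability `α` for `δ`-Nash equilibrium, whenever
`k > (72/ε²)(ln(m+1) + ln n − ln α − ln ε + ln 24)`: for every product distribution `x`,
if `x` is a `δ`-Nash equilibrium the test answers YES with probability ≥ `1 − α`, and if
`x` is not a `(δ+ε)`-Nash equilibrium the test answers NO with probability ≥ `1 − α`. -/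
theorem stmt2 {n m : ℕ} (hn : 0 < n) (hm : 0 < m)
    (u : Fin n → (Fin n → Fin m) → ℝ)
    (hu : ∀ i a, 0 ≤ u i a ∧ u i a ≤ 1)
    (ε α δ : ℝ) (hε : 0 < ε ∧ ε < 1) (hα : 0 < α ∧ α < 1) (hδ : 0 ≤ δ)
    (k : ℕ)
    (hk : (k : ℝ) >
      72 / ε ^ 2 *
        (Real.log (m + 1) + Real.log n - Real.log α - Real.log ε + Real.log 24)) :
    (∀ x : Fin n → Fin m → ℝ, (∀ i, IsDist (x i)) → IsNash u x δ →
      PrProd k x (fun a => IsNash u (emp k a) (δ + ε / 2)) ≥ 1 - α) ∧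
    (∀ x : Fin n → Fin m → ℝ, (∀ i, IsDist (x i)) → ¬ IsNash u x (δ + ε) →
      PrProd k x (fun a => ¬ IsNash u (emp k a) (δ + ε / 2)) ≥ 1 - α) := by
  obtain ⟨hε0, hε1⟩ := hε
  obtain ⟨hα0, hα1⟩ := hα
  have hε2 : (0:ℝ) < ε ^ 2 := by positivity
  set L : ℝ := Real.log (m + 1) + Real.log n - Real.log α - Real.log ε + Real.log 24
    with hLdef
  have hnR : (0:ℝ) < n := by exact_mod_cast hn
  have hmR : (0:ℝ) < (m:ℝ) + 1 := by positivity
  have hLpos : 0 < L := by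
    have l1 : 0 < Real.log ((m:ℝ) + 1) := by
      apply Real.log_pos
      have : (1:ℝ) ≤ (m:ℝ) := by exact_mod_cast hm
      linarith
    have l2 : 0 ≤ Real.log (n:ℝ) := Real.log_nonneg (by exact_mod_cast hn)
    have l3 : Real.log α < 0 := Real.log_neg hα0 hα1
    have l4 : Real.log ε < 0 := Real.log_neg hε0 hε1
    have l5 : 0 < Real.log 24 := Real.log_pos (by norm_num)
    rw [hLdef]
    linarith
  have hkRpos : (0:ℝ) < k := lt_trans (mul_pos (by positivity) hLpos) hk
  have hk0 : k ≠ 0 := by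
    intro h
    rw [h] at hkRpos
    norm_num at hkRpos
  -- the exponential bound
  have hexpL : Real.exp (-L) = α * ε / (24 * n * ((m:ℝ) + 1)) := by
    rw [show -L = (Real.log α + Real.log ε) -
        ((Real.log 24 + Real.log (n:ℝ)) + Real.log ((m:ℝ) + 1)) from by rw [hLdef]; ring]
    rw [Real.exp_sub, Real.exp_add, Real.exp_add, Real.exp_add]
    rw [Real.exp_log hα0, Real.exp_log hε0, Real.exp_log (by norm_num : (0:ℝ) < 24),
      Real.exp_log hnR, Real.exp_log hmR]
  have hk' : 72 * L < k * ε ^ 2 := by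
    have h1 : 72 / ε ^ 2 * L = 72 * L / ε ^ 2 := by ring
    rw [h1] at hk
    exact (div_lt_iff₀ hε2).1 hk
  have hexp_le : Real.exp (-(k * (ε / 4) ^ 2 / 4)) ≤ α * ε / (24 * n * ((m:ℝ) + 1)) := by
    rw [← hexpL]
    apply Real.exp_le_exp.2
    have : (k:ℝ) * (ε / 4) ^ 2 / 4 = k * ε ^ 2 / 64 := by ring
    rw [this]
    nlinarith
  have hcard : ((Fintype.card (Fin n × Option (Fin m)) : ℕ) : ℝ) = n * ((m:ℝ) + 1) := by
    rw [Fintype.card_prod, Fintype.card_option, Fintype.card_fin, Fintype.card_fin]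
    push_cast
    ring
  -- probability that some estimate is off
  have main : ∀ x : Fin n → Fin m → ℝ, (∀ i, IsDist (x i)) →
      PrProd k x (fun a => ¬ (∀ q : Fin n × Option (Fin m),
        |EU (wfam u q) (emp k a) - EU (wfam u q) x| ≤ ε / 4)) ≤ α := by
    intro x hx
    have hwf : ∀ q : Fin n × Option (Fin m), ∀ p, 0 ≤ wfam u q p ∧ wfam u q p ≤ 1 := by
      rintro ⟨i, _ | b⟩ p
      · exact hu i p
      · exact hu i _
    have step1 : PrProd k x (fun a => ¬ (∀ q : Fin n × Option (Fin m),
        |EU (wfam u q) (emp k a) - EU (wfam u q) x| ≤ ε / 4)) ≤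
        PrProd k x (fun a => ∃ q : Fin n × Option (Fin m),
          ε / 4 < |EU (wfam u q) (emp k a) - EU (wfam u q) x|) := by
      apply PrProd_mono hx
      intro a h
      push_neg at h
      exact h
    have step2 := PrProd_exists_le hx
      (fun (q : Fin n × Option (Fin m)) (a : Fin k → Fin n → Fin m) =>
        ε / 4 < |EU (wfam u q) (emp k a) - EU (wfam u q) x|)
    have step3 : ∀ q : Fin n × Option (Fin m),
        PrProd k x (fun a => ε / 4 < |EU (wfam u q) (emp k a) - EU (wfam u q) x|) ≤
        2 * Real.exp (-(k * (ε / 4) ^ 2 / 4)) :=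
      fun q => tail_abs hk0 hx (hwf q) (by positivity) (by linarith)
    have step4 : ∑ q : Fin n × Option (Fin m),
        PrProd k x (fun a => ε / 4 < |EU (wfam u q) (emp k a) - EU (wfam u q) x|) ≤
        (n * ((m:ℝ) + 1)) * (2 * Real.exp (-(k * (ε / 4) ^ 2 / 4))) := by
      calc ∑ q : Fin n × Option (Fin m),
          PrProd k x (fun a => ε / 4 < |EU (wfam u q) (emp k a) - EU (wfam u q) x|)
          ≤ ∑ _q : Fin n × Option (Fin m), 2 * Real.exp (-(k * (ε / 4) ^ 2 / 4)) :=
            Finset.sum_le_sum fun q _ => step3 q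
        _ = (n * ((m:ℝ) + 1)) * (2 * Real.exp (-(k * (ε / 4) ^ 2 / 4))) := by
            rw [Finset.sum_const, Finset.card_univ, nsmul_eq_mul, hcard]
    have step5 : (n * ((m:ℝ) + 1)) * (2 * Real.exp (-(k * (ε / 4) ^ 2 / 4))) ≤ α := by
      have h1 : (n * ((m:ℝ) + 1)) * (2 * Real.exp (-(k * (ε / 4) ^ 2 / 4))) ≤
          (n * ((m:ℝ) + 1)) * (2 * (α * ε / (24 * n * ((m:ℝ) + 1)))) := by
        apply mul_le_mul_of_nonneg_left _ (by positivity)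
        linarith [hexp_le]
      have h2 : (n * ((m:ℝ) + 1)) * (2 * (α * ε / (24 * n * ((m:ℝ) + 1)))) = α * ε / 12 := by
        field_simp
        ring
      nlinarith
    calc PrProd k x (fun a => ¬ (∀ q : Fin n × Option (Fin m),
          |EU (wfam u q) (emp k a) - EU (wfam u q) x| ≤ ε / 4))
        ≤ PrProd k x (fun a => ∃ q : Fin n × Option (Fin m),
            ε / 4 < |EU (wfam u q) (emp k a) - EU (wfam u q) x|) := step1
      _ ≤ ∑ q : Fin n × Option (Fin m),
            PrProd k x (fun a => ε / 4 < |EU (wfam u q) (emp k a) - EU (wfam u q) x|) := step2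
      _ ≤ (n * ((m:ℝ) + 1)) * (2 * Real.exp (-(k * (ε / 4) ^ 2 / 4))) := step4
      _ ≤ α := step5
  -- deterministic implications on the good event
  have det1 : ∀ x : Fin n → Fin m → ℝ, (∀ i, IsDist (x i)) → IsNash u x δ →
      ∀ a : Fin k → Fin n → Fin m,
      (∀ q : Fin n × Option (Fin m),
        |EU (wfam u q) (emp k a) - EU (wfam u q) x| ≤ ε / 4) →
      IsNash u (emp k a) (δ + ε / 2) := by
    intro x hx hN a hG i b
    have h0 := hG (i, none)
    have h1 := hG (i, some b)
    rw [wfam_none] at h0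
    rw [wfam_some] at h1
    have hge := EU_update (emp k a) (fun j => emp_sum_one hk0 a j) (u i) i b
    have hgx := EU_update x (fun j => (hx j).2) (u i) i b
    have hnb := hN i b
    rw [ge_iff_le] at hnb ⊢
    rw [hge]
    rw [hgx] at hnb
    have h0' := abs_le.1 h0
    have h1' := abs_le.1 h1
    linarith [h0'.1, h0'.2, h1'.1, h1'.2]
  have det2 : ∀ x : Fin n → Fin m → ℝ, (∀ i, IsDist (x i)) →
      ∀ a : Fin k → Fin n → Fin m,
      (∀ q : Fin n × Option (Fin m),
        |EU (wfam u q) (emp k a) - EU (wfam u q) x| ≤ ε / 4) →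
      IsNash u (emp k a) (δ + ε / 2) → IsNash u x (δ + ε) := by
    intro x hx a hG hNe i b
    have h0 := hG (i, none)
    have h1 := hG (i, some b)
    rw [wfam_none] at h0
    rw [wfam_some] at h1
    have hge := EU_update (emp k a) (fun j => emp_sum_one hk0 a j) (u i) i b
    have hgx := EU_update x (fun j => (hx j).2) (u i) i b
    have hnb := hNe i b
    rw [ge_iff_le] at hnb ⊢
    rw [hgx]
    rw [hge] at hnb
    have h0' := abs_le.1 h0
    have h1' := abs_le.1 h1
    linarith [h0'.1, h0'.2, h1'.1, h1'.2]
  constructor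
  · intro x hx hNash
    have hcompl := PrProd_compl hx (fun a => ∀ q : Fin n × Option (Fin m),
      |EU (wfam u q) (emp k a) - EU (wfam u q) x| ≤ ε / 4)
    have hmain := main x hx
    have hmono : PrProd k x (fun a => ∀ q : Fin n × Option (Fin m),
        |EU (wfam u q) (emp k a) - EU (wfam u q) x| ≤ ε / 4) ≤
        PrProd k x (fun a => IsNash u (emp k a) (δ + ε / 2)) :=
      PrProd_mono hx fun a hG => det1 x hx hNash a hG
    rw [ge_iff_le]
    calc 1 - α ≤ 1 - PrProd k x (fun a => ¬ (∀ q : Fin n × Option (Fin m),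
          |EU (wfam u q) (emp k a) - EU (wfam u q) x| ≤ ε / 4)) := by linarith
      _ = PrProd k x (fun a => ∀ q : Fin n × Option (Fin m),
          |EU (wfam u q) (emp k a) - EU (wfam u q) x| ≤ ε / 4) := hcompl.symm
      _ ≤ PrProd k x (fun a => IsNash u (emp k a) (δ + ε / 2)) := hmono
  · intro x hx hNot
    have hcompl := PrProd_compl hx (fun a => ∀ q : Fin n × Option (Fin m),
      |EU (wfam u q) (emp k a) - EU (wfam u q) x| ≤ ε / 4)
    have hmain := main x hx
    have hmono : PrProd k x (fun a => ∀ q : Fin n × Option (Fin m),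
        |EU (wfam u q) (emp k a) - EU (wfam u q) x| ≤ ε / 4) ≤
        PrProd k x (fun a => ¬ IsNash u (emp k a) (δ + ε / 2)) :=
      PrProd_mono hx fun a hG hNe => hNot (det2 x hx a hG hNe)
    rw [ge_iff_le]
    calc 1 - α ≤ 1 - PrProd k x (fun a => ¬ (∀ q : Fin n × Option (Fin m),
          |EU (wfam u q) (emp k a) - EU (wfam u q) x| ≤ ε / 4)) := by linarith
      _ = PrProd k x (fun a => ∀ q : Fin n × Option (Fin m),
          |EU (wfam u q) (emp k a) - EU (wfam u q) x| ≤ ε / 4) := hcompl.symm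
      _ ≤ PrProd k x (fun a => ¬ IsNash u (emp k a) (δ + ε / 2)) := hmono
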